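/- If Y has the asymmetric Laplace density f(y|μ,σ,p) = (p(1-p)/σ) exp{-ρ_p((y-μ)/σ)}, then the random variable W = ρ_p((Y-μ)/σ) follows a standard exponential distribution with rate 1. -/

import Mathlib

open Real MeasureTheory

/-- The check (loss) function `ρ_p(u) = u (p - 1{u<0})`. -/
noncomputable def rho (p u : ℝ) : ℝ := u * (p - if u < 0 then 1 else 0)

/-- The asymmetric Laplace density. -/
noncomputable def aldPdf (μ σ p y : ℝ) : ℝ :=
  p * (1 - p) / σ * Real.exp (-(rho p ((y - μ) / σ)))

lemma map_withDensity_comp {e : ℝ → ℝ} (he : Measurable e) {h : ℝ → ENNReal}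
    (hh : Measurable h) :
    ((volume : Measure ℝ).withDensity (fun x => h (e x))).map e
      = ((volume : Measure ℝ).map e).withDensity h := by
  ext s hs
  rw [Measure.map_apply he hs, withDensity_apply _ (he hs), withDensity_apply _ hs,
    setLIntegral_map hs hh he]

lemma map_volume_affine (a b : ℝ) (ha : a ≠ 0) :
    (volume : Measure ℝ).map (fun x => a * x + b) = ENNReal.ofReal |a⁻¹| • volume := by
  have h : (fun x : ℝ => a * x + b) = (fun y : ℝ => y + b) ∘ (fun x : ℝ => a * x) := rfl
  rw [h, ← Measure.map_map (measurable_add_const b) (measurable_const_mul a),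
    Real.map_volume_mul_left ha, Measure.map_smul, map_add_right_eq_self volume b]

lemma map_withDensity_affine (a b : ℝ) (ha : a ≠ 0) {h : ℝ → ENNReal}
    (hh : Measurable h) :
    ((volume : Measure ℝ).withDensity (fun x => h (a * x + b))).map (fun x => a * x + b)
      = (volume : Measure ℝ).withDensity (fun w => ENNReal.ofReal |a⁻¹| * h w) := by
  rw [map_withDensity_comp ((measurable_const_mul a).add_const b) hh,
    map_volume_affine a b ha, withDensity_smul_measure, ← withDensity_smul _ hh]
  rfl

/-- If `Y ~ ALD(μ,σ,p)`, then `W = ρ_p((Y-μ)/σ) ~ Exp(1)`. -/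
theorem ald_check_exp (μ σ p : ℝ) (hσ : 0 < σ) (hp : p ∈ Set.Ioo (0:ℝ) 1) :
    (volume.withDensity (fun y => ENNReal.ofReal (aldPdf μ σ p y))).map
      (fun y => rho p ((y - μ) / σ)) =
    volume.withDensity (fun w => ENNReal.ofReal (if 0 ≤ w then Real.exp (-w) else 0)) := by
  obtain ⟨hp0, hp1⟩ := hp
  have hp1' : 0 < 1 - p := by linarith
  set c : ℝ := p * (1 - p) / σ with hc
  set F : ℝ → ENNReal := fun y => ENNReal.ofReal (aldPdf μ σ p y) with hF
  set T : ℝ → ℝ := fun y => rho p ((y - μ) / σ) with hTdef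
  -- measurability
  have hrho : Measurable (rho p) := by
    unfold rho
    exact measurable_id.mul
      (measurable_const.sub (Measurable.ite measurableSet_Iio measurable_const measurable_const))
  have hT : Measurable T := hrho.comp ((measurable_id.sub_const μ).div_const σ)
  have hFm : Measurable F := by
    show Measurable fun y => ENNReal.ofReal (aldPdf μ σ p y)
    unfold aldPdf
    exact (measurable_const.mul (hT.neg.exp)).ennreal_ofReal
  -- densities for the two affine pieces
  set h₁ : ℝ → ENNReal := fun w => if 0 ≤ w then ENNReal.ofReal (c * Real.exp (-w)) else 0
    with hh₁def
  set h₂ : ℝ → ENNReal := fun w => if 0 < w then ENNReal.ofReal (c * Real.exp (-w)) else 0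
    with hh₂def
  have hh₁ : Measurable h₁ :=
    Measurable.ite measurableSet_Ici ((measurable_const.mul measurable_id.neg.exp).ennreal_ofReal)
      measurable_const
  have hh₂ : Measurable h₂ :=
    Measurable.ite measurableSet_Ioi ((measurable_const.mul measurable_id.neg.exp).ennreal_ofReal)
      measurable_const
  set a₁ : ℝ := p / σ with ha₁def
  set a₂ : ℝ := (p - 1) / σ with ha₂def
  have ha₁ : 0 < a₁ := div_pos hp0 hσ
  have ha₂ : a₂ < 0 := div_neg_of_neg_of_pos (by linarith) hσ
  set b₁ : ℝ := -(a₁ * μ) with hb₁def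
  set b₂ : ℝ := -(a₂ * μ) with hb₂def
  -- split ν into the two half lines
  set ν : Measure ℝ := volume.withDensity F with hν
  have hsplit : ν = ν.restrict (Set.Ici μ) + ν.restrict (Set.Iio μ) := by
    rw [← Set.compl_Ici (a := μ), Measure.restrict_add_restrict_compl measurableSet_Ici]
  -- value of rho on the two half lines
  have hrho_ge : ∀ y : ℝ, μ ≤ y → T y = a₁ * y + b₁ := by
    intro y hy
    have h0 : ¬ ((y - μ) / σ < 0) := not_lt.mpr (div_nonneg (by linarith) hσ.le)
    simp only [hTdef, rho, if_neg h0, ha₁def, hb₁def]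
    field_simp
    ring
  have hrho_lt : ∀ y : ℝ, y < μ → T y = a₂ * y + b₂ := by
    intro y hy
    have h0 : (y - μ) / σ < 0 := div_neg_of_neg_of_pos (by linarith) hσ
    simp only [hTdef, rho, if_pos h0, ha₂def, hb₂def]
    field_simp
    ring
  -- piece 1
  have hind₁ : (Set.Ici μ).indicator F = fun y => h₁ (a₁ * y + b₁) := by
    funext y
    by_cases hy : μ ≤ y
    · have hw : 0 ≤ a₁ * y + b₁ := by
        have : a₁ * y + b₁ = a₁ * (y - μ) := by simp [hb₁def]; ring
        rw [this]
        exact mul_nonneg ha₁.le (by linarith)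
      simp only [Set.indicator_apply, Set.mem_Ici, if_pos hy, hh₁def, if_pos hw]
      have : aldPdf μ σ p y = c * Real.exp (-(a₁ * y + b₁)) := by
        unfold aldPdf
        rw [← hrho_ge y hy, hTdef]
      exact congrArg ENNReal.ofReal this
    · have hw : ¬ (0 ≤ a₁ * y + b₁) := by
        push_neg
        have : a₁ * y + b₁ = a₁ * (y - μ) := by simp [hb₁def]; ring
        rw [this]
        exact mul_neg_of_pos_of_neg ha₁ (by linarith [not_le.mp hy])
      simp only [Set.indicator_apply, Set.mem_Ici, if_neg hy, hh₁def, if_neg hw]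
  have hmap₁ : (ν.restrict (Set.Ici μ)).map T
      = volume.withDensity (fun w => ENNReal.ofReal |a₁⁻¹| * h₁ w) := by
    have hae : T =ᵐ[ν.restrict (Set.Ici μ)] (fun y => a₁ * y + b₁) :=
      Filter.eventually_of_mem (self_mem_ae_restrict measurableSet_Ici)
        (fun y hy => hrho_ge y hy)
    rw [Measure.map_congr hae, hν, restrict_withDensity measurableSet_Ici,
      ← withDensity_indicator measurableSet_Ici, hind₁,
      map_withDensity_affine a₁ b₁ (ne_of_gt ha₁) hh₁]
  -- piece 2
  have hind₂ : (Set.Iio μ).indicator F = fun y => h₂ (a₂ * y + b₂) := by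
    funext y
    by_cases hy : y < μ
    · have hw : 0 < a₂ * y + b₂ := by
        have : a₂ * y + b₂ = a₂ * (y - μ) := by simp [hb₂def]; ring
        rw [this]
        exact mul_pos_of_neg_of_neg ha₂ (by linarith)
      simp only [Set.indicator_apply, Set.mem_Iio, if_pos hy, hh₂def, if_pos hw]
      have : aldPdf μ σ p y = c * Real.exp (-(a₂ * y + b₂)) := by
        unfold aldPdf
        rw [← hrho_lt y hy, hTdef]
      exact congrArg ENNReal.ofReal this
    · have hw : ¬ (0 < a₂ * y + b₂) := by
        push_neg
        have h : a₂ * y + b₂ = a₂ * (y - μ) := by simp [hb₂def]; ring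
        rw [h]
        exact mul_nonpos_of_nonpos_of_nonneg ha₂.le (by linarith [not_lt.mp hy])
      simp only [Set.indicator_apply, Set.mem_Iio, if_neg hy, hh₂def, if_neg hw]
  have hmap₂ : (ν.restrict (Set.Iio μ)).map T
      = volume.withDensity (fun w => ENNReal.ofReal |a₂⁻¹| * h₂ w) := by
    have hae : T =ᵐ[ν.restrict (Set.Iio μ)] (fun y => a₂ * y + b₂) :=
      Filter.eventually_of_mem (self_mem_ae_restrict measurableSet_Iio)
        (fun y hy => hrho_lt y hy)
    rw [Measure.map_congr hae, hν, restrict_withDensity measurableSet_Iio,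
      ← withDensity_indicator measurableSet_Iio, hind₂,
      map_withDensity_affine a₂ b₂ (ne_of_lt ha₂) hh₂]
  -- combine
  calc ν.map T = (ν.restrict (Set.Ici μ) + ν.restrict (Set.Iio μ)).map T := by rw [← hsplit]
    _ = (ν.restrict (Set.Ici μ)).map T + (ν.restrict (Set.Iio μ)).map T :=
        Measure.map_add _ _ hT
    _ = volume.withDensity (fun w => ENNReal.ofReal |a₁⁻¹| * h₁ w)
        + volume.withDensity (fun w => ENNReal.ofReal |a₂⁻¹| * h₂ w) := by
        rw [hmap₁, hmap₂]
    _ = volume.withDensity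
        (fun w => ENNReal.ofReal |a₁⁻¹| * h₁ w + ENNReal.ofReal |a₂⁻¹| * h₂ w) := by
        exact (withDensity_add_left (measurable_const.mul hh₁) _).symm
    _ = volume.withDensity (fun w => ENNReal.ofReal (if 0 ≤ w then Real.exp (-w) else 0)) := by
        apply withDensity_congr_ae
        have hne : ∀ᵐ w : ℝ ∂volume, w ≠ 0 := by
          rw [ae_iff]
          convert Real.volume_singleton (a := 0) using 2
          ext w
          simp
        filter_upwards [hne] with w hw
        have ha₁v : |a₁⁻¹| = σ / p := by
          rw [abs_of_pos (inv_pos.mpr ha₁), ha₁def, inv_div]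
        have ha₂v : |a₂⁻¹| = σ / (1 - p) := by
          rw [abs_of_neg (inv_neg''.mpr ha₂), ha₂def, inv_div,
            show p - 1 = -(1 - p) by ring, div_neg, neg_neg]
        rcases lt_or_gt_of_ne hw with hneg | hpos
        · have h1 : ¬ (0 ≤ w) := not_le.mpr hneg
          simp only [hh₁def, hh₂def, if_neg h1, if_neg (not_lt.mpr hneg.le), mul_zero,
            add_zero, ENNReal.ofReal_zero]
        · have h1 : 0 ≤ w := hpos.le
          simp only [hh₁def, hh₂def, if_pos h1, if_pos hpos]
          rw [ha₁v, ha₂v, ← ENNReal.ofReal_mul (by positivity), ← ENNReal.ofReal_mul (by positivity),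
            ← ENNReal.ofReal_add (by positivity) (by positivity)]
          congr 1
          have hσ' : σ ≠ 0 := ne_of_gt hσ
          have hp0' : p ≠ 0 := ne_of_gt hp0
          have hp1'' : (1 : ℝ) - p ≠ 0 := ne_of_gt hp1'
          field_simp [hc]
          rw [hc, mul_div_assoc', mul_div_cancel_left₀ _ hσ']
          ring
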